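/- arXiv:1810.10633 — 2 statements merged into one kernel-verified Lean document; each statement's English description precedes it below -/
import Mathlib

section
/- Let {ξ(n), n ∈ ℕ₀^d} be an orthogonal random field (mean zero, finite second moments, uncorrelated at distinct indices). Suppose there is a finite constant C₅ such that sup over m ∈ ℕ₀^d of 𝔼[S(m; 2^n)²] ≤ C₅ 𝔼[S(0; 2^n)²] for all n ∈ ℕ^d, where S(m;n) = Σ_{m < k ≤ m+n} ξ(k). If Σ_{n ∈ ℕ^d} 𝔼[ξ(n)²] / Π_{i=1}^d n_i² < ∞, then S(0;n) / Π_{i=1}^d n_i → 0 almost surely as |n| = max_i n_i → ∞. -/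
open MeasureTheory
open scoped ENNReal

/-! ### 1-d dyadic combinatorics -/

def dyadicFloor (n j : ℕ) : ℕ := 2 ^ j * (n / 2 ^ j)

lemma dyadicFloor_zero (n : ℕ) : dyadicFloor n 0 = n := by simp [dyadicFloor]

lemma dyadicFloor_le (n j : ℕ) : dyadicFloor n j ≤ n := Nat.mul_div_le n (2 ^ j)

lemma div_succ_pow (n j : ℕ) : n / 2 ^ (j + 1) = n / 2 ^ j / 2 := by
  rw [pow_succ, Nat.div_div_eq_div_mul]

lemma dyadicFloor_succ (n j : ℕ) :
    dyadicFloor n (j + 1) = 2 ^ j * (2 * (n / 2 ^ j / 2)) := by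
  unfold dyadicFloor
  rw [div_succ_pow, pow_succ]
  ring

lemma dyadicFloor_succ_le (n j : ℕ) : dyadicFloor n (j + 1) ≤ dyadicFloor n j := by
  rw [dyadicFloor_succ]
  exact Nat.mul_le_mul_left _ (by omega)

lemma dyadicFloor_antitone (n : ℕ) {i j : ℕ} (h : i ≤ j) :
    dyadicFloor n j ≤ dyadicFloor n i := by
  induction j with
  | zero => simp_all
  | succ j ih =>
    rcases Nat.lt_or_ge i (j+1) with h'|h'
    · exact le_trans (dyadicFloor_succ_le n j) (ih (by omega))
    · have : i = j + 1 := by omega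
      subst this; rfl

lemma dyadicFloor_eq_zero {n j : ℕ} (h : n < 2 ^ j) : dyadicFloor n j = 0 := by
  unfold dyadicFloor
  rw [Nat.div_eq_of_lt h, Nat.mul_zero]

lemma dyadicFloor_dichotomy (n j : ℕ) :
    dyadicFloor n j = dyadicFloor n (j + 1) ∨
    dyadicFloor n j = dyadicFloor n (j + 1) + 2 ^ j := by
  rw [dyadicFloor_succ]
  unfold dyadicFloor
  rcases Nat.even_or_odd (n / 2 ^ j) with ⟨c, hc⟩ | ⟨c, hc⟩
  · left; rw [hc]
    have h2 : (c + c) / 2 = c := by omega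
    rw [h2]; ring
  · right; rw [hc]
    have h2 : (2 * c + 1) / 2 = c := by omega
    rw [h2]; ring

def dyadicPiece (n x : ℕ) : ℕ :=
  Nat.findGreatest (fun j => x ≤ dyadicFloor n j) (Nat.log 2 n)

lemma fiber_1d {n x j : ℕ} (hj : j ≤ Nat.log 2 n) :
    (1 ≤ x ∧ x ≤ n ∧ dyadicPiece n x = j) ↔
      (dyadicFloor n (j + 1) < x ∧ x ≤ dyadicFloor n j) := by
  have hlt : n < 2 ^ (Nat.log 2 n + 1) := Nat.lt_pow_succ_log_self (by norm_num) n
  constructor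
  · rintro ⟨hx1, hxn, rfl⟩
    have hP0 : x ≤ dyadicFloor n 0 := by rwa [dyadicFloor_zero]
    have hspec : x ≤ dyadicFloor n (dyadicPiece n x) :=
      Nat.findGreatest_spec (P := fun j => x ≤ dyadicFloor n j) (Nat.zero_le _) hP0
    refine ⟨?_, hspec⟩
    rcases Nat.lt_or_ge (dyadicPiece n x) (Nat.log 2 n) with h | h
    · have hng := Nat.findGreatest_is_greatest (P := fun j => x ≤ dyadicFloor n j)
        (n := Nat.log 2 n) (k := dyadicPiece n x + 1) (lt_add_one _) (by omega)
      simp only [not_le] at hng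
      exact hng
    · have hJ : dyadicPiece n x = Nat.log 2 n :=
        le_antisymm (Nat.findGreatest_le _) h
      rw [hJ]
      have h0 : dyadicFloor n (Nat.log 2 n + 1) = 0 := dyadicFloor_eq_zero hlt
      omega
  · rintro ⟨hlo, hhi⟩
    have hx1 : 1 ≤ x := by omega
    have hxn : x ≤ n := le_trans hhi (dyadicFloor_le n j)
    refine ⟨hx1, hxn, le_antisymm ?_ (Nat.le_findGreatest hj hhi)⟩
    by_contra hgt
    push_neg at hgt
    have hP0 : x ≤ dyadicFloor n 0 := by rwa [dyadicFloor_zero]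
    have hspec : x ≤ dyadicFloor n (dyadicPiece n x) :=
      Nat.findGreatest_spec (P := fun j => x ≤ dyadicFloor n j) (Nat.zero_le _) hP0
    have : dyadicFloor n (dyadicPiece n x) ≤ dyadicFloor n (j + 1) :=
      dyadicFloor_antitone n hgt
    omega

/-! ### multi-dimensional boxes -/

variable {d : ℕ}

def Box (p : Fin d → ℕ) : Finset (Fin d → ℕ) :=
  Fintype.piFinset (fun i => Finset.range (p i + 1))

lemma mem_Box {p j : Fin d → ℕ} : j ∈ Box p ↔ ∀ i, j i ≤ p i := by
  simp [Box, Nat.lt_succ_iff]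

def Tset (p j : Fin d → ℕ) : Finset (Fin d → ℕ) :=
  Fintype.piFinset (fun i => Finset.range (2 ^ (p i + 1 - j i)))

def dBox (j t : Fin d → ℕ) : Finset (Fin d → ℕ) :=
  Finset.Icc (fun i => t i * 2 ^ (j i) + 1) (fun i => t i * 2 ^ (j i) + 2 ^ (j i))

noncomputable def cwt (p j : Fin d → ℕ) : ℝ := ∏ i, (3/4 : ℝ) ^ (p i - j i)

lemma cwt_pos (p j : Fin d → ℕ) : 0 < cwt p j :=
  Finset.prod_pos fun i _ => pow_pos (by norm_num) _

lemma rect_decomp (ξω : (Fin d → ℕ) → ℝ) (n : Fin d → ℕ) (hn : ∀ i, 1 ≤ n i) :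
    ∑ k ∈ Finset.Icc (fun _ => 1) n, ξω k =
      ∑ j ∈ Box (fun i => Nat.log 2 (n i)),
        ∑ k ∈ Finset.Icc (fun i => dyadicFloor (n i) (j i + 1) + 1)
            (fun i => dyadicFloor (n i) (j i)), ξω k := by
  rw [← Finset.sum_fiberwise_of_maps_to (t := Box (fun i => Nat.log 2 (n i)))
    (g := fun k => fun i => dyadicPiece (n i) (k i))
    (fun k _ => mem_Box.2 fun i => Nat.findGreatest_le _) ξω]
  refine Finset.sum_congr rfl fun j hj => ?_
  have hjp : ∀ i, j i ≤ Nat.log 2 (n i) := mem_Box.1 hj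
  congr 1
  ext k
  simp only [Finset.mem_filter, Finset.mem_Icc, funext_iff]
  constructor
  · rintro ⟨⟨h1, h2⟩, h3⟩
    have := fun i => (fiber_1d (hjp i)).1 ⟨h1 i, h2 i, h3 i⟩
    exact ⟨fun i => (this i).1, fun i => (this i).2⟩
  · rintro ⟨h1, h2⟩
    have := fun i => (fiber_1d (hjp i)).2 ⟨h1 i, h2 i⟩
    exact ⟨⟨fun i => (this i).1, fun i => (this i).2.1⟩, fun i => (this i).2.2⟩

lemma dyadicFloor_succ_eq_mul (n j : ℕ) :
    dyadicFloor n (j + 1) = 2 * (n / 2 ^ (j + 1)) * 2 ^ j := by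
  unfold dyadicFloor; rw [pow_succ]; ring

lemma fiber_sq_le (ξω : (Fin d → ℕ) → ℝ) (n j : Fin d → ℕ)
    (hj : ∀ i, j i ≤ Nat.log 2 (n i)) :
    (∑ k ∈ Finset.Icc (fun i => dyadicFloor (n i) (j i + 1) + 1)
        (fun i => dyadicFloor (n i) (j i)), ξω k) ^ 2 ≤
      ∑ t ∈ Tset (fun i => Nat.log 2 (n i)) j,
        (∑ k ∈ dBox j t, ξω k) ^ 2 := by
  by_cases hfull : ∀ i, dyadicFloor (n i) (j i) = dyadicFloor (n i) (j i + 1) + 2 ^ (j i)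
  · set t₀ : Fin d → ℕ := fun i => 2 * (n i / 2 ^ (j i + 1)) with ht₀
    have hbox : Finset.Icc (fun i => dyadicFloor (n i) (j i + 1) + 1)
        (fun i => dyadicFloor (n i) (j i)) = dBox j t₀ := by
      unfold dBox
      congr 1
      · funext i; rw [ht₀]; rw [dyadicFloor_succ_eq_mul]
      · funext i; rw [hfull i, dyadicFloor_succ_eq_mul]
    have ht₀mem : t₀ ∈ Tset (fun i => Nat.log 2 (n i)) j := by
      simp only [Tset, Fintype.mem_piFinset, Finset.mem_range]
      intro i
      have h1 : (t₀ i + 1) * 2 ^ (j i) = dyadicFloor (n i) (j i) := by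
        rw [hfull i, dyadicFloor_succ_eq_mul]; ring
      have h2 : dyadicFloor (n i) (j i) ≤ n i := dyadicFloor_le _ _
      have h3 : n i < 2 ^ (Nat.log 2 (n i) + 1) :=
        Nat.lt_pow_succ_log_self (by norm_num) _
      have h4 : (t₀ i + 1) * 2 ^ (j i) < 2 ^ (Nat.log 2 (n i) + 1 - j i) * 2 ^ (j i) := by
        rw [← pow_add]
        have : Nat.log 2 (n i) + 1 - j i + j i = Nat.log 2 (n i) + 1 := by
          have := hj i; omega
        rw [this]; omega
      have := Nat.lt_of_mul_lt_mul_right h4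
      omega
    rw [hbox]
    exact Finset.single_le_sum (f := fun t => (∑ k ∈ dBox j t, ξω k) ^ 2)
      (fun t _ => sq_nonneg _) ht₀mem
  · push_neg at hfull
    obtain ⟨i, hi⟩ := hfull
    have hdeg : dyadicFloor (n i) (j i) = dyadicFloor (n i) (j i + 1) := by
      rcases dyadicFloor_dichotomy (n i) (j i) with h | h
      · exact h
      · exact absurd h hi
    have hempty : Finset.Icc (fun i => dyadicFloor (n i) (j i + 1) + 1)
        (fun i => dyadicFloor (n i) (j i)) = ∅ := by
      apply Finset.Icc_eq_empty
      intro hle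
      have := hle i
      simp only [hdeg] at this
      omega
    rw [hempty]
    simp only [Finset.sum_empty]
    have : (0:ℝ) ≤ ∑ t ∈ Tset (fun i => Nat.log 2 (n i)) j, (∑ k ∈ dBox j t, ξω k) ^ 2 :=
      Finset.sum_nonneg fun t _ => sq_nonneg _
    simpa using this

/-! ### Cauchy–Schwarz assembly -/

lemma sum_range_geom_le (m : ℕ) : ∑ q ∈ Finset.range m, (3/4 : ℝ) ^ q ≤ 4 := by
  have h := geom_sum_eq (by norm_num : (3/4 : ℝ) ≠ 1) m
  rw [h]
  have h1 : (0:ℝ) ≤ (3/4 : ℝ) ^ m := by positivity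
  have h2 : (3/4 : ℝ) ^ m ≤ 1 := pow_le_one₀ (by norm_num) (by norm_num)
  rw [div_le_iff_of_neg (by norm_num : (3/4 : ℝ) - 1 < 0)]
  nlinarith

lemma sum_cwt_le (p : Fin d → ℕ) : ∑ j ∈ Box p, cwt p j ≤ (4 : ℝ) ^ d := by
  unfold Box cwt
  have hps := Finset.prod_univ_sum (fun i => Finset.range (p i + 1))
    (fun i q => (3/4:ℝ) ^ (p i - q))
  rw [← hps]
  calc ∏ i, ∑ q ∈ Finset.range (p i + 1), (3/4 : ℝ) ^ (p i - q)
      ≤ ∏ _i : Fin d, (4:ℝ) := by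
        apply Finset.prod_le_prod
        · intro i _; exact Finset.sum_nonneg fun q _ => by positivity
        · intro i _
          rw [← Finset.sum_range_reflect]
          calc ∑ q ∈ Finset.range (p i + 1), (3/4:ℝ) ^ (p i - (p i + 1 - 1 - q))
              = ∑ q ∈ Finset.range (p i + 1), (3/4:ℝ) ^ q := by
                apply Finset.sum_congr rfl
                intro q hq
                simp only [Finset.mem_range] at hq
                congr 1
                omega
            _ ≤ 4 := sum_range_geom_le _
    _ = (4:ℝ) ^ d := by simp

lemma CS_step (p : Fin d → ℕ) (b : (Fin d → ℕ) → ℝ) :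
    (∑ j ∈ Box p, b j) ^ 2 ≤
      (4:ℝ) ^ d * ∑ j ∈ Box p, (cwt p j)⁻¹ * (b j) ^ 2 := by
  have key : (∑ j ∈ Box p, b j) ^ 2 ≤
      (∑ j ∈ Box p, cwt p j) * ∑ j ∈ Box p, (cwt p j)⁻¹ * (b j) ^ 2 := by
    have := Finset.sum_mul_sq_le_sq_mul_sq (Box p)
      (fun j => Real.sqrt (cwt p j)) (fun j => b j / Real.sqrt (cwt p j))
    have heq : ∀ j ∈ Box p, Real.sqrt (cwt p j) * (b j / Real.sqrt (cwt p j)) = b j := by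
      intro j _
      have hne : Real.sqrt (cwt p j) ≠ 0 := ne_of_gt (Real.sqrt_pos.2 (cwt_pos p j))
      rw [mul_comm]
      exact div_mul_cancel₀ _ hne
    rw [Finset.sum_congr rfl heq] at this
    refine le_trans this (le_of_eq ?_)
    congr 1
    · apply Finset.sum_congr rfl; intro j _
      exact Real.sq_sqrt (cwt_pos p j).le
    · apply Finset.sum_congr rfl; intro j _
      rw [div_pow, Real.sq_sqrt (cwt_pos p j).le, div_eq_inv_mul]
  refine le_trans key (mul_le_mul_of_nonneg_right (sum_cwt_le p) ?_)
  exact Finset.sum_nonneg fun j _ => mul_nonneg (inv_nonneg.2 (cwt_pos p j).le) (sq_nonneg _)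

/-- the main pointwise bound -/
lemma pointwise_bound (ξω : (Fin d → ℕ) → ℝ) (n : Fin d → ℕ) (hn : ∀ i, 1 ≤ n i) :
    (∑ k ∈ Finset.Icc (fun _ => 1) n, ξω k) ^ 2 ≤
      (4:ℝ) ^ d * ∑ j ∈ Box (fun i => Nat.log 2 (n i)),
        (cwt (fun i => Nat.log 2 (n i)) j)⁻¹ *
          ∑ t ∈ Tset (fun i => Nat.log 2 (n i)) j, (∑ k ∈ dBox j t, ξω k) ^ 2 := by
  rw [rect_decomp ξω n hn]
  refine le_trans (CS_step _ _) (mul_le_mul_of_nonneg_left ?_ (by positivity))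
  refine Finset.sum_le_sum fun j hj => ?_
  refine mul_le_mul_of_nonneg_left ?_ (inv_nonneg.2 (cwt_pos _ j).le)
  exact fiber_sq_le ξω n j (mem_Box.1 hj)

/-! ### integration lemmas -/

lemma memL2_integrable_mul {Ω : Type*} [MeasurableSpace Ω] {μ : Measure Ω} {f g : Ω → ℝ}
    (hf : MemLp f 2 μ) (hg : MemLp g 2 μ) :
    Integrable (fun ω => f ω * g ω) μ := by
  have hf2 := hf.integrable_sq
  have hg2 := hg.integrable_sq
  refine ((hf2.add hg2).const_mul (1/2 : ℝ)).mono' (hf.1.mul hg.1) ?_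
  filter_upwards with ω
  have h2 : 2 * |f ω| * |g ω| ≤ |f ω| ^ 2 + |g ω| ^ 2 := two_mul_le_add_sq _ _
  have habs : ‖f ω * g ω‖ = |f ω| * |g ω| := by rw [Real.norm_eq_abs, abs_mul]
  rw [habs]
  have hsq : |f ω| ^ 2 + |g ω| ^ 2 = f ω ^ 2 + g ω ^ 2 := by rw [sq_abs, sq_abs]
  simp only [Pi.add_apply]
  nlinarith [abs_nonneg (f ω), abs_nonneg (g ω)]

lemma var_sum {Ω : Type*} [MeasurableSpace Ω] (μ : Measure Ω) {ι : Type*} [DecidableEq ι]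
    (ξ : ι → Ω → ℝ) (h_memLp : ∀ n, MemLp (ξ n) 2 μ)
    (h_orth : ∀ m n, m ≠ n → ∫ ω, ξ m ω * ξ n ω ∂μ = 0)
    (s : Finset ι) :
    ∫ ω, (∑ k ∈ s, ξ k ω) ^ 2 ∂μ = ∑ k ∈ s, ∫ ω, (ξ k ω) ^ 2 ∂μ := by
  have hint : ∀ k l : ι, Integrable (fun ω => ξ k ω * ξ l ω) μ :=
    fun k l => memL2_integrable_mul (h_memLp k) (h_memLp l)
  have expand : ∀ ω, (∑ k ∈ s, ξ k ω) ^ 2 = ∑ k ∈ s, ∑ l ∈ s, ξ k ω * ξ l ω := by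
    intro ω
    rw [sq, Finset.sum_mul_sum]
  calc ∫ ω, (∑ k ∈ s, ξ k ω) ^ 2 ∂μ
      = ∫ ω, ∑ k ∈ s, ∑ l ∈ s, ξ k ω * ξ l ω ∂μ := by
        congr 1; funext ω; exact expand ω
    _ = ∑ k ∈ s, ∑ l ∈ s, ∫ ω, ξ k ω * ξ l ω ∂μ := by
        rw [integral_finset_sum s (fun k _ => integrable_finset_sum s (fun l _ => hint k l))]
        exact Finset.sum_congr rfl fun k _ => integral_finset_sum s (fun l _ => hint k l)
    _ = ∑ k ∈ s, ∫ ω, (ξ k ω) ^ 2 ∂μ := by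
        refine Finset.sum_congr rfl fun k hk => ?_
        rw [Finset.sum_eq_single_of_mem k hk (fun l _ hlk => h_orth k l (Ne.symm hlk))]
        congr 1; funext ω; rw [sq]

/-! ### ENNReal summation machinery -/

lemma tsum_pi_prod : ∀ {m : ℕ} (f : Fin m → ℕ → ℝ≥0∞),
    ∑' q : Fin m → ℕ, ∏ i, f i (q i) = ∏ i, ∑' n, f i n := by
  intro m
  induction m with
  | zero =>
    intro f
    rw [tsum_eq_single (fun i => 0) (fun b hb => absurd (funext fun i => i.elim0) hb)]
    simp
  | succ m ih =>
    intro f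
    have he := (Fin.consEquiv (fun _ : Fin (m+1) => ℕ)).tsum_eq
      (f := fun q : Fin (m+1) → ℕ => ∏ i, f i (q i))
    rw [← he]
    have heq : ∀ x : ℕ × (Fin m → ℕ),
        (∏ i, f i ((Fin.consEquiv (fun _ : Fin (m+1) => ℕ)) x i)) =
          f 0 x.1 * ∏ i : Fin m, f i.succ (x.2 i) := by
      rintro ⟨a, q⟩
      rw [Fin.prod_univ_succ]
      simp [Fin.consEquiv]
    rw [tsum_congr heq]
    rw [ENNReal.tsum_prod']
    simp_rw [ENNReal.tsum_mul_left, ENNReal.tsum_mul_right]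
    rw [ih (fun i => f i.succ), Fin.prod_univ_succ]

lemma tsum_ite_ge (r : ℕ) (x : ℝ≥0∞) :
    ∑' n : ℕ, (if r ≤ n then x ^ n else 0) = x ^ r * (1 - x)⁻¹ := by
  have hinj : Function.Injective (fun k : ℕ => k + r) := fun a b h => by simpa using h
  have hsupp : Function.support (fun n : ℕ => if r ≤ n then x ^ n else 0) ⊆
      Set.range (fun k : ℕ => k + r) := by
    intro n hn
    simp only [Function.mem_support] at hn
    by_cases h : r ≤ n
    · exact ⟨n - r, by simp; omega⟩
    · simp [h] at hn
  rw [← Function.Injective.tsum_eq hinj hsupp]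
  have heq : ∀ k : ℕ, (if r ≤ k + r then x ^ (k + r) else 0) = x ^ r * x ^ k := by
    intro k
    rw [if_pos (by omega), pow_add]
    ring
  rw [tsum_congr heq, ENNReal.tsum_mul_left, ENNReal.tsum_geometric]

/-- per-coordinate tail bound -/
lemma coord_tail_bound {k : ℕ} (hk : 1 ≤ k) :
    ∑' j : ℕ, (if k ≤ 2 ^ (j + 1) then (ENNReal.ofReal (1/4)) ^ j else 0) ≤
      ENNReal.ofReal (4 / (k:ℝ)^2) * (1 - ENNReal.ofReal (1/4))⁻¹ := by
  set r := Nat.clog 2 k - 1 with hr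
  have hcond : ∀ j : ℕ, (k ≤ 2 ^ (j + 1)) ↔ r ≤ j := by
    intro j
    rw [← Nat.clog_le_iff_le_pow (by norm_num : 1 < 2)]
    omega
  have : (fun j : ℕ => if k ≤ 2 ^ (j + 1) then (ENNReal.ofReal (1/4)) ^ j else 0) =
      (fun j : ℕ => if r ≤ j then (ENNReal.ofReal (1/4)) ^ j else 0) := by
    funext j
    by_cases h : k ≤ 2 ^ (j + 1)
    · rw [if_pos h, if_pos ((hcond j).1 h)]
    · rw [if_neg h, if_neg (fun hr' => h ((hcond j).2 hr'))]
  rw [this, tsum_ite_ge]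
  refine mul_le_mul_left ?_ _
  rw [← ENNReal.ofReal_pow (by norm_num)]
  apply ENNReal.ofReal_le_ofReal
  -- (1/4)^r ≤ 4 / k^2  since  k ≤ 2^(r+1)
  have hk2 : k ≤ 2 ^ (r + 1) := by
    rcases Nat.eq_zero_or_pos (Nat.clog 2 k) with h0 | hpos
    · have hk1 : k ≤ 2 ^ 0 := (Nat.clog_le_iff_le_pow (by norm_num : 1 < 2)).1 (by omega)
      have : k = 1 := by omega
      subst this
      exact Nat.one_le_two_pow
    · have : Nat.clog 2 k ≤ r + 1 := by omega
      exact le_trans (Nat.le_pow_clog (by norm_num) k) (Nat.pow_le_pow_right (by norm_num) this)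
  have hkR : (k:ℝ) ≤ 2 ^ (r + 1) := by
    have := hk2
    exact_mod_cast Nat.cast_le.2 this
  have hkpos : (0:ℝ) < (k:ℝ) := by positivity
  have hsq : (k:ℝ)^2 ≤ 4 * 4 ^ r := by
    have h := mul_le_mul hkR hkR hkpos.le (by positivity)
    have hpow : (2:ℝ)^(r+1) * (2:ℝ)^(r+1) = 4 * 4 ^ r := by
      rw [← pow_add]
      have h' : r + 1 + (r + 1) = 2 * (r + 1) := by ring
      rw [h', pow_mul]
      norm_num
      rw [pow_succ]
      ring
    nlinarith [sq_nonneg ((k:ℝ))]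
  have h4r : (0:ℝ) < (4:ℝ)^r := by positivity
  have hks : (0:ℝ) < (k:ℝ)^2 := by positivity
  rw [one_div, inv_pow, le_div_iff₀ hks, inv_mul_le_iff₀ h4r]
  linarith

lemma coordalg {pi ji : ℕ} (h : ji ≤ pi) :
    ((4:ℝ)^pi)⁻¹ * (((3/4:ℝ)^(pi - ji))⁻¹ * (2:ℝ)^(pi + 1 - ji)) =
      2 * ((2/3:ℝ)^(pi - ji) * ((4:ℝ)^ji)⁻¹) := by
  obtain ⟨q, rfl⟩ : ∃ q, pi = ji + q := ⟨pi - ji, by omega⟩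
  have h1 : ji + q - ji = q := by omega
  have h2 : ji + q + 1 - ji = q + 1 := by omega
  rw [h1, h2]
  have key : ((4:ℝ)^q)⁻¹ * (((3/4:ℝ)^q)⁻¹ * (2:ℝ)^q) = (2/3:ℝ)^q := by
    rw [← inv_pow, ← inv_pow, ← mul_pow, ← mul_pow]
    norm_num
  have h4 : ((4:ℝ)^(ji+q))⁻¹ = ((4:ℝ)^ji)⁻¹ * ((4:ℝ)^q)⁻¹ := by rw [pow_add, mul_inv]
  rw [h4, pow_succ, ← key]
  ring


theorem orthogonal_field_SLLN
    {Ω : Type*} [MeasurableSpace Ω] (μ : Measure Ω) [IsProbabilityMeasure μ]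
    (d : ℕ) (hd : 1 ≤ d)
    (ξ : (Fin d → ℕ) → Ω → ℝ)
    (S : (Fin d → ℕ) → (Fin d → ℕ) → Ω → ℝ)
    (hS : ∀ m n ω, S m n ω =
      ∑ k ∈ Finset.Icc (fun i => m i + 1) (fun i => m i + n i), ξ k ω)
    (h_memLp : ∀ n, MemLp (ξ n) 2 μ)
    (h_mean : ∀ n, ∫ ω, ξ n ω ∂μ = 0)
    (h_orth : ∀ m n, m ≠ n → ∫ ω, ξ m ω * ξ n ω ∂μ = 0)
    (C₅ : ℝ)
    (h_sup : ∀ n : Fin d → ℕ, (∀ i, 1 ≤ n i) → ∀ m : Fin d → ℕ,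
        ∫ ω, (S m (fun i => 2 ^ n i) ω) ^ 2 ∂μ ≤
          C₅ * ∫ ω, (S 0 (fun i => 2 ^ n i) ω) ^ 2 ∂μ)
    (h_sum : Summable fun n : {n : Fin d → ℕ // ∀ i, 1 ≤ n i} =>
        (∫ ω, (ξ (n : Fin d → ℕ) ω) ^ 2 ∂μ) /
          ∏ i : Fin d, ((n : Fin d → ℕ) i : ℝ) ^ 2) :
    ∀ᵐ ω ∂μ, ∀ ε > 0, ∃ N : ℕ, ∀ n : Fin d → ℕ,
      N ≤ Finset.univ.sup n →
        |S 0 n ω| / ∏ i : Fin d, (n i : ℝ) < ε := by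
  classical
  set a : (Fin d → ℕ) → ℝ := fun k => ∫ ω, (ξ k ω) ^ 2 ∂μ with ha_def
  have ha0 : ∀ k, 0 ≤ a k := fun k => integral_nonneg fun ω => sq_nonneg _
  have hvar : ∀ s : Finset (Fin d → ℕ), ∫ ω, (∑ k ∈ s, ξ k ω) ^ 2 ∂μ = ∑ k ∈ s, a k :=
    fun s => var_sum μ ξ h_memLp h_orth s
  have hMem : ∀ s : Finset (Fin d → ℕ), MemLp (fun ω => ∑ k ∈ s, ξ k ω) 2 μ :=
    fun s => memLp_finset_sum s (fun k _ => h_memLp k)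
  have hInt : ∀ s : Finset (Fin d → ℕ), Integrable (fun ω => (∑ k ∈ s, ξ k ω) ^ 2) μ :=
    fun s => (hMem s).integrable_sq
  have hS0 : ∀ (n' : Fin d → ℕ) (ω : Ω), S 0 n' ω = ∑ k ∈ Finset.Icc (fun _ => 1) n', ξ k ω := by
    intro n' ω
    rw [hS]
    have h1 : (fun i => (0 : Fin d → ℕ) i + 1) = (fun _ : Fin d => 1) := by funext i; simp
    have h2 : (fun i => (0 : Fin d → ℕ) i + n' i) = n' := by funext i; simp
    rw [h1, h2]
  set C := max C₅ 1 with hC_def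
  have hC0 : (0:ℝ) ≤ C := le_trans zero_le_one (le_max_right _ _)
  set V : (Fin d → ℕ) → ℝ :=
    fun j => ∑ k ∈ Finset.Icc (fun _ => 1) (fun i => 2 ^ (j i + 1)), a k with hV_def
  have hV0 : ∀ j, 0 ≤ V j := fun j => Finset.sum_nonneg fun k _ => ha0 k
  have hbox : ∀ j t : Fin d → ℕ,
      ∫ ω, (∑ k ∈ dBox j t, ξ k ω) ^ 2 ∂μ ≤ C * V j := by
    intro j t
    set jj : Fin d → ℕ := fun i => max (j i) 1 with hjj_def
    have hjj1 : ∀ i, 1 ≤ jj i := fun i => le_max_right _ _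
    have step1 : ∫ ω, (∑ k ∈ dBox j t, ξ k ω) ^ 2 ∂μ ≤
        ∫ ω, (S (fun i => t i * 2 ^ (j i)) (fun i => 2 ^ (jj i)) ω) ^ 2 ∂μ := by
      have hrw : ∫ ω, (S (fun i => t i * 2 ^ (j i)) (fun i => 2 ^ (jj i)) ω) ^ 2 ∂μ =
          ∑ k ∈ Finset.Icc (fun i => t i * 2 ^ (j i) + 1)
            (fun i => t i * 2 ^ (j i) + 2 ^ (jj i)), a k := by
        simp only [hS]
        exact hvar _
      rw [hrw, hvar]
      apply Finset.sum_le_sum_of_subset_of_nonneg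
      · apply Finset.Icc_subset_Icc le_rfl
        intro i
        exact Nat.add_le_add_left (Nat.pow_le_pow_right (by norm_num) (le_max_left _ _)) _
      · exact fun k _ _ => ha0 k
    have step2 : ∫ ω, (S (fun i => t i * 2 ^ (j i)) (fun i => 2 ^ (jj i)) ω) ^ 2 ∂μ ≤
        C₅ * ∫ ω, (S 0 (fun i => 2 ^ (jj i)) ω) ^ 2 ∂μ :=
      h_sup jj hjj1 _
    have hzero : ∫ ω, (S 0 (fun i => 2 ^ (jj i)) ω) ^ 2 ∂μ =
        ∑ k ∈ Finset.Icc (fun _ => 1) (fun i => 2 ^ (jj i)), a k := by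
      have : ∀ ω, S 0 (fun i => 2 ^ (jj i)) ω =
          ∑ k ∈ Finset.Icc (fun _ => 1) (fun i => 2 ^ (jj i)), ξ k ω := fun ω => hS0 _ ω
      simp only [this]
      exact hvar _
    have step3 : ∫ ω, (S 0 (fun i => 2 ^ (jj i)) ω) ^ 2 ∂μ ≤ V j := by
      rw [hzero, hV_def]
      apply Finset.sum_le_sum_of_subset_of_nonneg
      · apply Finset.Icc_subset_Icc le_rfl
        intro i
        exact Nat.pow_le_pow_right (by norm_num) (by simp only [hjj_def]; omega)
      · exact fun k _ _ => ha0 k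
    have hV0' : (0:ℝ) ≤ ∫ ω, (S 0 (fun i => 2 ^ (jj i)) ω) ^ 2 ∂μ :=
      integral_nonneg fun ω => sq_nonneg _
    calc ∫ ω, (∑ k ∈ dBox j t, ξ k ω) ^ 2 ∂μ
        ≤ C₅ * ∫ ω, (S 0 (fun i => 2 ^ (jj i)) ω) ^ 2 ∂μ := le_trans step1 step2
      _ ≤ C * ∫ ω, (S 0 (fun i => 2 ^ (jj i)) ω) ^ 2 ∂μ :=
          mul_le_mul_of_nonneg_right (le_max_left _ _) hV0'
      _ ≤ C * V j := mul_le_mul_of_nonneg_left step3 hC0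

  set g : (Fin d → ℕ) → Ω → ℝ := fun p ω =>
    (∏ i, ((4:ℝ) ^ (p i))⁻¹) * ((4:ℝ) ^ d * ∑ j ∈ Box p, (cwt p j)⁻¹ *
      ∑ t ∈ Tset p j, (∑ k ∈ dBox j t, ξ k ω) ^ 2) with hg_def
  have hg0 : ∀ p ω, 0 ≤ g p ω := by
    intro p ω
    apply mul_nonneg (Finset.prod_nonneg fun i _ => by positivity)
    apply mul_nonneg (by positivity)
    exact Finset.sum_nonneg fun j _ => mul_nonneg (inv_nonneg.2 (cwt_pos p j).le)
      (Finset.sum_nonneg fun t _ => sq_nonneg _)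
  have hg_int : ∀ p, Integrable (g p) μ := by
    intro p
    apply Integrable.const_mul
    apply Integrable.const_mul
    apply integrable_finset_sum
    intro j _
    exact (integrable_finset_sum _ fun t _ => hInt (dBox j t)).const_mul _
  have hpt : ∀ n : Fin d → ℕ, (∀ i, 1 ≤ n i) → ∀ ω : Ω,
      (|S 0 n ω| / ∏ i, (n i : ℝ)) ^ 2 ≤ g (fun i => Nat.log 2 (n i)) ω := by
    intro n hn ω
    set p : Fin d → ℕ := fun i => Nat.log 2 (n i) with hp_def
    have hb : (S 0 n ω) ^ 2 ≤ (4:ℝ) ^ d * ∑ j ∈ Box p, (cwt p j)⁻¹ *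
        ∑ t ∈ Tset p j, (∑ k ∈ dBox j t, ξ k ω) ^ 2 := by
      rw [hS0 n ω]
      exact pointwise_bound (fun k => ξ k ω) n hn
    set PR : ℝ := ∏ i, (4:ℝ) ^ (p i) with hPR_def
    have hPRpos : 0 < PR := Finset.prod_pos fun i _ => by positivity
    have hPn : PR ≤ (∏ i, (n i : ℝ)) ^ 2 := by
      rw [← Finset.prod_pow]
      apply Finset.prod_le_prod (fun i _ => by positivity)
      intro i _
      have h2 : (2:ℕ) ^ (p i) ≤ n i := Nat.pow_log_le_self 2 (by have := hn i; omega)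
      have h2R : (2:ℝ) ^ (p i) ≤ (n i : ℝ) := by exact_mod_cast h2
      have h4 : (4:ℝ) ^ (p i) = ((2:ℝ) ^ (p i)) ^ 2 := by
        rw [← pow_mul, mul_comm, pow_mul]
        norm_num
      rw [h4]
      exact pow_le_pow_left₀ (by positivity) h2R 2
    have habs : (|S 0 n ω| / ∏ i, (n i : ℝ)) ^ 2 = (S 0 n ω) ^ 2 / (∏ i, (n i : ℝ)) ^ 2 := by
      rw [div_pow, sq_abs]
    rw [habs]
    have hgform : g p ω = ((4:ℝ) ^ d * ∑ j ∈ Box p, (cwt p j)⁻¹ *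
        ∑ t ∈ Tset p j, (∑ k ∈ dBox j t, ξ k ω) ^ 2) / PR := by
      rw [hg_def]
      simp only []
      rw [div_eq_mul_inv, mul_comm, hPR_def, ← Finset.prod_inv_distrib]
    rw [hgform]
    calc (S 0 n ω) ^ 2 / (∏ i, (n i : ℝ)) ^ 2
        ≤ (S 0 n ω) ^ 2 / PR := by
          apply div_le_div_of_nonneg_left (sq_nonneg _) hPRpos hPn
      _ ≤ _ := (div_le_div_iff_of_pos_right hPRpos).2 hb

  set DD : (Fin d → ℕ) → ℝ := fun j =>
    (8:ℝ) ^ d * C * (∏ i, ((4:ℝ) ^ (j i))⁻¹) * V j with hDD_def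
  have hDD0 : ∀ j, 0 ≤ DD j := by
    intro j
    apply mul_nonneg (mul_nonneg (mul_nonneg (by positivity) hC0)
      (Finset.prod_nonneg fun i _ => by positivity)) (hV0 j)
  have hgE : ∀ p, ∫ ω, g p ω ∂μ ≤
      ∑ j ∈ Box p, (∏ i, (2/3:ℝ) ^ (p i - j i)) * DD j := by
    intro p
    have hinner_int : ∀ j : Fin d → ℕ, Integrable (fun ω => (cwt p j)⁻¹ *
        ∑ t ∈ Tset p j, (∑ k ∈ dBox j t, ξ k ω) ^ 2) μ :=
      fun j => (integrable_finset_sum _ fun t _ => hInt (dBox j t)).const_mul _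
    have hval : ∫ ω, g p ω ∂μ = (∏ i, ((4:ℝ) ^ (p i))⁻¹) * ((4:ℝ) ^ d *
        ∑ j ∈ Box p, (cwt p j)⁻¹ * ∑ t ∈ Tset p j,
          ∫ ω, (∑ k ∈ dBox j t, ξ k ω) ^ 2 ∂μ) := by
      rw [hg_def]
      simp only []
      rw [integral_const_mul, integral_const_mul,
        integral_finset_sum _ (fun j _ => hinner_int j)]
      congr 2
      refine Finset.sum_congr rfl fun j _ => ?_
      rw [integral_const_mul, integral_finset_sum _ (fun t _ => hInt (dBox j t))]
    rw [hval]
    have hTcard : ∀ j : Fin d → ℕ, ((Tset p j).card : ℝ) = ∏ i, (2:ℝ) ^ (p i + 1 - j i) := by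
      intro j
      rw [Tset, Fintype.card_piFinset]
      push_cast
      refine Finset.prod_congr rfl fun i _ => by rw [Finset.card_range]; push_cast; ring
    have hsumT : ∀ j : Fin d → ℕ, ∑ t ∈ Tset p j, ∫ ω, (∑ k ∈ dBox j t, ξ k ω) ^ 2 ∂μ ≤
        (∏ i, (2:ℝ) ^ (p i + 1 - j i)) * (C * V j) := by
      intro j
      calc ∑ t ∈ Tset p j, ∫ ω, (∑ k ∈ dBox j t, ξ k ω) ^ 2 ∂μ
          ≤ ∑ _t ∈ Tset p j, C * V j := Finset.sum_le_sum fun t _ => hbox j t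
        _ = ((Tset p j).card : ℝ) * (C * V j) := by rw [Finset.sum_const, nsmul_eq_mul]
        _ = _ := by rw [hTcard j]
    have hCV0 : ∀ j, (0:ℝ) ≤ C * V j := fun j => mul_nonneg hC0 (hV0 j)
    have hmono : (∏ i, ((4:ℝ) ^ (p i))⁻¹) * ((4:ℝ) ^ d *
        ∑ j ∈ Box p, (cwt p j)⁻¹ * ∑ t ∈ Tset p j,
          ∫ ω, (∑ k ∈ dBox j t, ξ k ω) ^ 2 ∂μ) ≤
        (∏ i, ((4:ℝ) ^ (p i))⁻¹) * ((4:ℝ) ^ d *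
        ∑ j ∈ Box p, (cwt p j)⁻¹ * ((∏ i, (2:ℝ) ^ (p i + 1 - j i)) * (C * V j))) := by
      apply mul_le_mul_of_nonneg_left _ (Finset.prod_nonneg fun i _ => by positivity)
      apply mul_le_mul_of_nonneg_left _ (by positivity)
      refine Finset.sum_le_sum fun j _ => ?_
      exact mul_le_mul_of_nonneg_left (hsumT j) (inv_nonneg.2 (cwt_pos p j).le)
    refine le_trans hmono (le_of_eq ?_)
    rw [Finset.mul_sum, Finset.mul_sum]
    refine Finset.sum_congr rfl fun j hj => ?_
    have hji : ∀ i, j i ≤ p i := mem_Box.1 hj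
    have hprod : (∏ i, ((4:ℝ)^(p i))⁻¹) *
        ((∏ i, ((3/4:ℝ)^(p i - j i)))⁻¹ * ∏ i, (2:ℝ)^(p i + 1 - j i)) =
        ∏ i, (2 * ((2/3:ℝ)^(p i - j i) * ((4:ℝ)^(j i))⁻¹)) := by
      calc (∏ i, ((4:ℝ)^(p i))⁻¹) *
          ((∏ i, ((3/4:ℝ)^(p i - j i)))⁻¹ * ∏ i, (2:ℝ)^(p i + 1 - j i))
          = ∏ i, (((4:ℝ)^(p i))⁻¹ *
              ((((3/4:ℝ)^(p i - j i)))⁻¹ * (2:ℝ)^(p i + 1 - j i))) := by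
            rw [Finset.prod_mul_distrib, Finset.prod_mul_distrib, ← Finset.prod_inv_distrib]
        _ = ∏ i, (2 * ((2/3:ℝ)^(p i - j i) * ((4:ℝ)^(j i))⁻¹)) :=
            Finset.prod_congr rfl fun i _ => coordalg (hji i)
    have hsplit : (∏ i, (2 * ((2/3:ℝ)^(p i - j i) * ((4:ℝ)^(j i))⁻¹))) =
        (2:ℝ)^d * ((∏ i, (2/3:ℝ)^(p i - j i)) * ∏ i, ((4:ℝ)^(j i))⁻¹) := by
      rw [Finset.prod_mul_distrib, Finset.prod_mul_distrib, Finset.prod_const,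
        Finset.card_univ, Fintype.card_fin]
    have h8 : (8:ℝ)^d = 2^d * 4^d := by rw [← mul_pow]; norm_num
    simp only [hDD_def, cwt]
    calc (∏ i, ((4:ℝ)^(p i))⁻¹) * ((4:ℝ)^d * ((∏ i, ((3/4:ℝ)^(p i - j i)))⁻¹ *
          ((∏ i, (2:ℝ)^(p i + 1 - j i)) * (C * V j))))
        = ((∏ i, ((4:ℝ)^(p i))⁻¹) * ((∏ i, ((3/4:ℝ)^(p i - j i)))⁻¹ *
            ∏ i, (2:ℝ)^(p i + 1 - j i))) * ((4:ℝ)^d * (C * V j)) := by ring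
      _ = ((2:ℝ)^d * ((∏ i, (2/3:ℝ)^(p i - j i)) * ∏ i, ((4:ℝ)^(j i))⁻¹)) *
            ((4:ℝ)^d * (C * V j)) := by rw [hprod, hsplit]
      _ = (∏ i, (2/3:ℝ)^(p i - j i)) *
            ((8:ℝ)^d * C * (∏ i, ((4:ℝ)^(j i))⁻¹) * V j) := by rw [h8]; ring

  have hsum_fin : (∑' p : Fin d → ℕ, ∫⁻ ω, ENNReal.ofReal (g p ω) ∂μ) ≠ ⊤ := by
    set u : ℝ≥0∞ := ENNReal.ofReal (2/3) with hu_def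
    set v : ℝ≥0∞ := ENNReal.ofReal (1/4) with hv_def
    have hu1 : u < 1 := ENNReal.ofReal_lt_one.2 (by norm_num)
    have hv1 : v < 1 := ENNReal.ofReal_lt_one.2 (by norm_num)
    have hu_ne : (1 - u)⁻¹ ≠ ⊤ := ENNReal.inv_ne_top.2 (by
      rw [ne_eq, tsub_eq_zero_iff_le]
      exact not_le.2 hu1)
    have hv_ne : (1 - v)⁻¹ ≠ ⊤ := ENNReal.inv_ne_top.2 (by
      rw [ne_eq, tsub_eq_zero_iff_le]
      exact not_le.2 hv1)
    set F : (Fin d → ℕ) → (Fin d → ℕ) → ℝ≥0∞ := fun p j =>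
      if (∀ i, j i ≤ p i) then (∏ i, u ^ (p i - j i)) * ENNReal.ofReal (DD j) else 0
      with hF_def
    have hofg : ∀ p, ∫⁻ ω, ENNReal.ofReal (g p ω) ∂μ = ENNReal.ofReal (∫ ω, g p ω ∂μ) :=
      fun p => (ofReal_integral_eq_lintegral_ofReal (hg_int p)
        (Filter.Eventually.of_forall (hg0 p))).symm
    have hstep1 : ∀ p, ∫⁻ ω, ENNReal.ofReal (g p ω) ∂μ ≤ ∑' j : Fin d → ℕ, F p j := by
      intro p
      rw [hofg p]
      refine le_trans (ENNReal.ofReal_le_ofReal (hgE p)) ?_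
      rw [ENNReal.ofReal_sum_of_nonneg (fun j _ =>
        mul_nonneg (Finset.prod_nonneg fun i _ => by positivity) (hDD0 j))]
      have hcong : ∀ j ∈ Box p,
          ENNReal.ofReal ((∏ i, (2/3:ℝ) ^ (p i - j i)) * DD j) = F p j := by
        intro j hj
        rw [hF_def]
        simp only [if_pos (mem_Box.1 hj)]
        rw [ENNReal.ofReal_mul (Finset.prod_nonneg fun i _ => by positivity)]
        congr 1
        rw [ENNReal.ofReal_prod_of_nonneg (fun i _ => by positivity)]
        exact Finset.prod_congr rfl fun i _ => ENNReal.ofReal_pow (by norm_num) _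
      have hts : ∑' j : Fin d → ℕ, F p j = ∑ j ∈ Box p, F p j := by
        refine tsum_eq_sum fun j hj => ?_
        rw [hF_def]
        simp only [if_neg (fun h => hj (mem_Box.2 h))]
      rw [hts, Finset.sum_congr rfl hcong]
    have hstep2 : ∀ j : Fin d → ℕ, ∑' p : Fin d → ℕ, F p j =
        ((1 - u)⁻¹) ^ d * ENNReal.ofReal (DD j) := by
      intro j
      have hinj : Function.Injective (fun q : Fin d → ℕ => fun i => j i + q i) := by
        intro q1 q2 h
        funext i
        have := congrFun h i
        simpa using this
      have hsupp : Function.support (fun p => F p j) ⊆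
          Set.range (fun q : Fin d → ℕ => fun i => j i + q i) := by
        intro p hp
        rw [Function.mem_support, hF_def] at hp
        by_cases h : ∀ i, j i ≤ p i
        · refine ⟨fun i => p i - j i, funext fun i => ?_⟩
          have := h i
          simp only []
          omega
        · simp only [if_neg h] at hp
          exact absurd rfl hp
      rw [← Function.Injective.tsum_eq hinj hsupp]
      have heval : ∀ q : Fin d → ℕ, F (fun i => j i + q i) j =
          (∏ i, u ^ (q i)) * ENNReal.ofReal (DD j) := by
        intro q
        rw [hF_def]
        simp only [if_pos (fun i => Nat.le_add_right _ _)]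
        congr 1
        exact Finset.prod_congr rfl fun i _ => by congr 1; omega
      rw [tsum_congr heval, ENNReal.tsum_mul_right]
      congr 1
      rw [tsum_pi_prod (fun _ n => u ^ n)]
      simp [ENNReal.tsum_geometric]
    have hDDrw : ∀ j : Fin d → ℕ, ENNReal.ofReal (DD j) =
        ENNReal.ofReal ((8:ℝ)^d * C) * ((∏ i, v ^ (j i)) *
          ∑ k ∈ Finset.Icc (fun _ => 1) (fun i => 2 ^ (j i + 1)), ENNReal.ofReal (a k)) := by
      intro j
      have hinv : ∀ e : ℕ, ((4:ℝ)^e)⁻¹ = (1/4:ℝ)^e := by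
        intro e
        rw [← inv_pow]
        norm_num
      have h1 : DD j = ((8:ℝ)^d * C) * ((∏ i, (1/4:ℝ) ^ (j i)) * V j) := by
        rw [hDD_def]
        simp only []
        rw [Finset.prod_congr rfl fun i _ => hinv (j i)]
        ring
      rw [h1, ENNReal.ofReal_mul (mul_nonneg (by positivity) hC0)]
      congr 1
      rw [ENNReal.ofReal_mul (Finset.prod_nonneg fun i _ => by positivity)]
      congr 1
      · rw [ENNReal.ofReal_prod_of_nonneg (fun i _ => by positivity)]
        exact Finset.prod_congr rfl fun i _ => ENNReal.ofReal_pow (by norm_num) _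
      · rw [hV_def]
        exact ENNReal.ofReal_sum_of_nonneg fun k _ => ha0 k
    -- the k-exchange
    set s : Set (Fin d → ℕ) := {k | ∀ i, 1 ≤ k i} with hs_def
    set f' : (Fin d → ℕ) → ℝ≥0∞ :=
      fun k => ENNReal.ofReal (a k / ∏ i, ((k i : ℝ))^2) with hf'_def
    set W : ℝ≥0∞ := ENNReal.ofReal ((4:ℝ)^d) * ((1 - v)⁻¹) ^ d with hW_def
    have hstep3 : ∑' j : Fin d → ℕ, (∏ i, v ^ (j i)) *
        ∑ k ∈ Finset.Icc (fun _ => 1) (fun i => 2 ^ (j i + 1)), ENNReal.ofReal (a k) ≤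
        W * ∑' k : Fin d → ℕ, s.indicator f' k := by
      have hXts : ∀ j : Fin d → ℕ,
          ∑ k ∈ Finset.Icc (fun _ => 1) (fun i => 2 ^ (j i + 1)), ENNReal.ofReal (a k) =
          ∑' k : Fin d → ℕ, (if k ∈ Finset.Icc (fun _ : Fin d => 1)
            (fun i => 2 ^ (j i + 1)) then ENNReal.ofReal (a k) else 0) := by
        intro j
        rw [tsum_eq_sum (s := Finset.Icc (fun _ : Fin d => 1) (fun i => 2 ^ (j i + 1)))
          (fun k hk => if_neg hk)]
        exact (Finset.sum_congr rfl fun k hk => (if_pos hk).symm)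
      calc ∑' j : Fin d → ℕ, (∏ i, v ^ (j i)) *
            ∑ k ∈ Finset.Icc (fun _ => 1) (fun i => 2 ^ (j i + 1)), ENNReal.ofReal (a k)
          = ∑' (j : Fin d → ℕ) (k : Fin d → ℕ), (∏ i, v ^ (j i)) *
              (if k ∈ Finset.Icc (fun _ : Fin d => 1) (fun i => 2 ^ (j i + 1))
                then ENNReal.ofReal (a k) else 0) := by
            refine tsum_congr fun j => ?_
            rw [hXts j, ENNReal.tsum_mul_left]
        _ = ∑' (k : Fin d → ℕ) (j : Fin d → ℕ), (∏ i, v ^ (j i)) *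
              (if k ∈ Finset.Icc (fun _ : Fin d => 1) (fun i => 2 ^ (j i + 1))
                then ENNReal.ofReal (a k) else 0) := ENNReal.tsum_comm
        _ ≤ ∑' k : Fin d → ℕ, W * s.indicator f' k := by
            refine ENNReal.tsum_le_tsum fun k => ?_
            by_cases hk : ∀ i, 1 ≤ k i
            · -- main case
              have hmem : ∀ j : Fin d → ℕ,
                  (k ∈ Finset.Icc (fun _ : Fin d => 1) (fun i => 2 ^ (j i + 1))) ↔
                    ∀ i, k i ≤ 2 ^ (j i + 1) := by
                intro j
                rw [Finset.mem_Icc]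
                constructor
                · exact fun h => h.2
                · exact fun h => ⟨fun i => hk i, h⟩
              have hsplit : ∀ j : Fin d → ℕ, (∏ i, v ^ (j i)) *
                  (if k ∈ Finset.Icc (fun _ : Fin d => 1) (fun i => 2 ^ (j i + 1))
                    then ENNReal.ofReal (a k) else 0) =
                  (∏ i, (if k i ≤ 2 ^ (j i + 1) then v ^ (j i) else 0)) *
                    ENNReal.ofReal (a k) := by
                intro j
                by_cases h : ∀ i, k i ≤ 2 ^ (j i + 1)
                · rw [if_pos ((hmem j).2 h)]
                  have hpe : (∏ i, v ^ (j i)) =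
                      ∏ i, (if k i ≤ 2 ^ (j i + 1) then v ^ (j i) else 0) :=
                    Finset.prod_congr rfl fun i _ => (if_pos (h i)).symm
                  rw [hpe]
                · rw [if_neg (fun hmem' => h ((hmem j).1 hmem')), mul_zero]
                  push_neg at h
                  obtain ⟨i0, hi0⟩ := h
                  have h0 : (∏ i, (if k i ≤ 2 ^ (j i + 1) then v ^ (j i) else 0))
                      = 0 :=
                    Finset.prod_eq_zero (Finset.mem_univ i0) (if_neg (by omega))
                  rw [h0, zero_mul]
              rw [tsum_congr hsplit, ENNReal.tsum_mul_right,
                tsum_pi_prod (fun i n => if k i ≤ 2 ^ (n + 1) then v ^ n else 0)]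
              have hcoord : (∏ i, ∑' n : ℕ, (if k i ≤ 2 ^ (n + 1) then v ^ n else 0)) ≤
                  ∏ i, (ENNReal.ofReal (4 / ((k i : ℝ))^2) * (1 - v)⁻¹) :=
                Finset.prod_le_prod' fun i _ => coord_tail_bound (hk i)
              refine le_trans (mul_le_mul_left hcoord _) (le_of_eq ?_)
              rw [Finset.prod_mul_distrib, Finset.prod_const, Finset.card_univ,
                Fintype.card_fin]
              have hof : (∏ i, ENNReal.ofReal (4 / ((k i : ℝ))^2)) * ENNReal.ofReal (a k) =
                  ENNReal.ofReal ((4:ℝ)^d) * f' k := by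
                rw [hf'_def]
                simp only []
                rw [← ENNReal.ofReal_prod_of_nonneg (fun i _ => by positivity),
                  ← ENNReal.ofReal_mul (Finset.prod_nonneg fun i _ => by positivity),
                  ← ENNReal.ofReal_mul (by positivity)]
                congr 1
                rw [Finset.prod_div_distrib, Finset.prod_const, Finset.card_univ,
                  Fintype.card_fin]
                rw [div_mul_eq_mul_div, mul_div_assoc]
              rw [Set.indicator_of_mem (by exact hk : k ∈ s), hW_def]
              calc (∏ i, ENNReal.ofReal (4 / ((k i : ℝ))^2)) * ((1 - v)⁻¹)^d *
                    ENNReal.ofReal (a k)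
                  = ((∏ i, ENNReal.ofReal (4 / ((k i : ℝ))^2)) * ENNReal.ofReal (a k)) *
                      ((1 - v)⁻¹)^d := by ring
                _ = (ENNReal.ofReal ((4:ℝ)^d) * f' k) * ((1 - v)⁻¹)^d := by rw [hof]
                _ = ENNReal.ofReal ((4:ℝ)^d) * ((1 - v)⁻¹)^d * f' k := by
                    ring
            · -- degenerate k
              have hz : ∀ j : Fin d → ℕ,
                  (∏ i, v ^ (j i)) * (if k ∈ Finset.Icc (fun _ : Fin d => 1)
                    (fun i => 2 ^ (j i + 1)) then ENNReal.ofReal (a k) else 0) = 0 := by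
                intro j
                rw [if_neg, mul_zero]
                rw [Finset.mem_Icc]
                rintro ⟨h1, _⟩
                exact hk fun i => h1 i
              rw [tsum_congr hz]
              simp
        _ = W * ∑' k : Fin d → ℕ, s.indicator f' k := ENNReal.tsum_mul_left
    have hT_ne : (∑' k : Fin d → ℕ, s.indicator f' k) ≠ ⊤ := by
      rw [← tsum_subtype s f']
      have key := ENNReal.ofReal_tsum_of_nonneg
        (f := fun n : {n : Fin d → ℕ // ∀ i, 1 ≤ n i} =>
          a (n : Fin d → ℕ) / ∏ i : Fin d, ((n : Fin d → ℕ) i : ℝ)^2)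
        (fun x => div_nonneg (ha0 _) (Finset.prod_nonneg fun i _ => sq_nonneg _)) h_sum
      have heq : (∑' x : ↥s, f' (x : Fin d → ℕ)) =
          ∑' n : {n : Fin d → ℕ // ∀ i, 1 ≤ n i}, ENNReal.ofReal
            (a (n : Fin d → ℕ) / ∏ i : Fin d, ((n : Fin d → ℕ) i : ℝ)^2) := rfl
      rw [heq, ← key]
      exact ENNReal.ofReal_ne_top
    -- final assembly
    have hfinal : (∑' p : Fin d → ℕ, ∫⁻ ω, ENNReal.ofReal (g p ω) ∂μ) ≤
        ((1 - u)⁻¹) ^ d * (ENNReal.ofReal ((8:ℝ)^d * C) *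
          (W * ∑' k : Fin d → ℕ, s.indicator f' k)) := by
      calc (∑' p : Fin d → ℕ, ∫⁻ ω, ENNReal.ofReal (g p ω) ∂μ)
          ≤ ∑' (p : Fin d → ℕ) (j : Fin d → ℕ), F p j := ENNReal.tsum_le_tsum hstep1
        _ = ∑' (j : Fin d → ℕ) (p : Fin d → ℕ), F p j := ENNReal.tsum_comm
        _ = ∑' j : Fin d → ℕ, ((1 - u)⁻¹) ^ d * ENNReal.ofReal (DD j) :=
            tsum_congr hstep2
        _ = ((1 - u)⁻¹) ^ d * ∑' j : Fin d → ℕ, ENNReal.ofReal (DD j) :=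
            ENNReal.tsum_mul_left
        _ = ((1 - u)⁻¹) ^ d * (ENNReal.ofReal ((8:ℝ)^d * C) *
              ∑' j : Fin d → ℕ, (∏ i, v ^ (j i)) *
                ∑ k ∈ Finset.Icc (fun _ => 1) (fun i => 2 ^ (j i + 1)),
                  ENNReal.ofReal (a k)) := by
            rw [tsum_congr hDDrw, ENNReal.tsum_mul_left]
        _ ≤ _ := by
            refine mul_le_mul_right (mul_le_mul_right hstep3 _) _
    refine ne_top_of_le_ne_top ?_ hfinal
    apply ENNReal.mul_ne_top (ENNReal.pow_ne_top hu_ne)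
    apply ENNReal.mul_ne_top ENNReal.ofReal_ne_top
    apply ENNReal.mul_ne_top _ hT_ne
    rw [hW_def]
    exact ENNReal.mul_ne_top ENNReal.ofReal_ne_top (ENNReal.pow_ne_top hv_ne)

  -- conclusion
  have hmeas : ∀ p : Fin d → ℕ, AEMeasurable (fun ω => ENNReal.ofReal (g p ω)) μ :=
    fun p => ENNReal.measurable_ofReal.comp_aemeasurable (hg_int p).1.aemeasurable
  have hlin : ∫⁻ ω, ∑' p : Fin d → ℕ, ENNReal.ofReal (g p ω) ∂μ ≠ ⊤ := by
    rw [lintegral_tsum hmeas]; exact hsum_fin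
  have hae : ∀ᵐ ω ∂μ, (∑' p : Fin d → ℕ, ENNReal.ofReal (g p ω)) < ⊤ :=
    ae_lt_top' (AEMeasurable.ennreal_tsum hmeas) hlin
  filter_upwards [hae] with ω hω
  intro ε hε
  have htend := ENNReal.tendsto_cofinite_zero_of_tsum_ne_top hω.ne
  have hev : ∀ᶠ p in Filter.cofinite,
      ENNReal.ofReal (g p ω) < ENNReal.ofReal (ε ^ 2) :=
    htend.eventually (gt_mem_nhds (ENNReal.ofReal_pos.2 (by positivity)))
  rw [Filter.eventually_cofinite] at hev
  set B := hev.toFinset with hB_def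
  set Nb := B.sup (fun p => Finset.univ.sup p) with hNb_def
  refine ⟨2 ^ (Nb + 1), fun n hn => ?_⟩
  by_cases hpos : ∀ i, 1 ≤ n i
  · set p : Fin d → ℕ := fun i => Nat.log 2 (n i) with hp_def
    have hpB : p ∉ B := by
      intro hpB
      have huniv : (Finset.univ : Finset (Fin d)).Nonempty :=
        ⟨⟨0, by omega⟩, Finset.mem_univ _⟩
      obtain ⟨i0, _, hi0⟩ := Finset.exists_mem_eq_sup Finset.univ huniv n
      have hbig : 2 ^ (Nb + 1) ≤ n i0 := by rw [← hi0]; exact hn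
      have hp2 : 0 < 2 ^ (Nb + 1) := Nat.two_pow_pos _
      have hlog : Nb + 1 ≤ Nat.log 2 (n i0) :=
        (Nat.le_log_iff_pow_le (by norm_num) (by omega)).2 hbig
      have hpi0 : p i0 = Nat.log 2 (n i0) := rfl
      have hle : p i0 ≤ Nb :=
        le_trans (Finset.le_sup (Finset.mem_univ i0)) (Finset.le_sup (f := fun p => Finset.univ.sup p) hpB)
      omega
    have hsmall : g p ω < ε ^ 2 := by
      have : ¬ ¬ (ENNReal.ofReal (g p ω) < ENNReal.ofReal (ε ^ 2)) := by
        intro hcon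
        exact hpB (hev.mem_toFinset.2 hcon)
      push_neg at this
      exact (ENNReal.ofReal_lt_ofReal_iff_of_nonneg (hg0 p ω)).1 this
    have h2 : (|S 0 n ω| / ∏ i, (n i : ℝ)) ^ 2 < ε ^ 2 :=
      lt_of_le_of_lt (hpt n hpos ω) hsmall
    exact lt_of_pow_lt_pow_left₀ 2 hε.le h2
  · push_neg at hpos
    obtain ⟨i, hi⟩ := hpos
    have : (∏ i, (n i : ℝ)) = 0 :=
      Finset.prod_eq_zero (Finset.mem_univ i) (by
        have : n i = 0 := by omega
        simp [this])
    rw [this, div_zero]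
    exact hε
end

section
/- Let M(k;n) = max_{1 ≤ j ≤ n} |S(k;j)| where S(k;j) is the sum of ξ over Q_{k+j}\Q_k (spherical shells). For p > 1, any integers k, n ≥ 0, and any 2 ≤ l ≤ a, we have M(k; l a^n)^p ≤ (2^{p−1} − 1)|S(k; (l−1)a^n)|^p + M(k; (l−1)a^n)^p + 2^{p−1} M(k + (l−1)a^n; a^n)^p. -/
open MeasureTheory


lemma my_add_rpow_le (x y : ℝ) (hx : 0 ≤ x) (hy : 0 ≤ y) {p : ℝ} (hp : 1 ≤ p) :
    (x + y) ^ p ≤ (2 : ℝ) ^ (p - 1) * (x ^ p + y ^ p) := by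
  have h := NNReal.rpow_add_le_mul_rpow_add_rpow (⟨x, hx⟩ : NNReal) ⟨y, hy⟩ hp
  have := NNReal.coe_le_coe.2 h
  push_cast at this
  exact this

lemma shell_box (d m n B : ℕ) (hB : m + n ≤ B) :
    ((Finset.Icc (0 : Fin d → ℕ) (fun _ => B)).filter
        (fun k => ∑ i, (k i) ^ 2 ≤ (m + n) ^ 2 ∧ ¬ (∑ i, (k i) ^ 2 ≤ m ^ 2)))
      = ((Finset.Icc (0 : Fin d → ℕ) (fun _ => m + n)).filter
        (fun k => ∑ i, (k i) ^ 2 ≤ (m + n) ^ 2 ∧ ¬ (∑ i, (k i) ^ 2 ≤ m ^ 2))) := by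
  ext k
  simp only [Finset.mem_filter, Finset.mem_Icc, Pi.le_def]
  constructor
  · rintro ⟨⟨h0, hBk⟩, hc⟩
    refine ⟨⟨h0, fun i => ?_⟩, hc⟩
    have h1 : (k i) ^ 2 ≤ (m + n) ^ 2 :=
      le_trans (Finset.single_le_sum (f := fun j => k j ^ 2) (fun j _ => Nat.zero_le _)
        (Finset.mem_univ i)) hc.1
    nlinarith
  · rintro ⟨⟨h0, hle⟩, hc⟩
    exact ⟨⟨h0, fun i => le_trans (hle i) hB⟩, hc⟩

theorem maximal_shell_recursion_pointwise
    (d : ℕ) (hd : 1 ≤ d)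
    (ξ : (Fin d → ℕ) → ℝ)
    (S : ℕ → ℕ → ℝ)
    -- S m n is the sum of ξ over the spherical shell Q_{m+n} \ Q_m.
    (hS : ∀ m n, S m n =
      ∑ k ∈ (Finset.Icc (0 : Fin d → ℕ) (fun _ => m + n)).filter
          (fun k => ∑ i, (k i) ^ 2 ≤ (m + n) ^ 2 ∧ ¬ (∑ i, (k i) ^ 2 ≤ m ^ 2)),
        ξ k)
    (M : ℕ → ℕ → ℝ)
    -- M m n = max_{1 ≤ j ≤ n} |S m j|
    (hM : ∀ m n, M m n = sSup ((fun j => |S m j|) '' Set.Icc 1 n))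
    (p : ℝ) (hp : 1 < p) (a : ℕ) (ha : 2 ≤ a) :
    ∀ k n l : ℕ, 2 ≤ l → l ≤ a →
      M k (l * a ^ n) ^ p ≤
        (2 ^ (p - 1) - 1) * |S k ((l - 1) * a ^ n)| ^ p +
          M k ((l - 1) * a ^ n) ^ p +
          2 ^ (p - 1) * M (k + (l - 1) * a ^ n) (a ^ n) ^ p := by
  -- additivity of S over shells
  have hSadd : ∀ m u v : ℕ, S m (u + v) = S m u + S (m + u) v := by
    intro m u v
    rw [hS, hS, hS]
    rw [← shell_box d m u (m + (u + v)) (by omega)]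
    simp only [← Nat.add_assoc]
    rw [← Finset.sum_union]
    · congr 1
      rw [← Finset.filter_or]
      apply Finset.filter_congr
      intro k _
      have h1 : m ^ 2 ≤ (m + u) ^ 2 := Nat.pow_le_pow_left (by omega) 2
      have h2 : (m + u) ^ 2 ≤ (m + u + v) ^ 2 := Nat.pow_le_pow_left (by omega) 2
      constructor
      · rintro ⟨hC, hA⟩
        by_cases hB : ∑ i, (k i) ^ 2 ≤ (m + u) ^ 2
        · exact Or.inl ⟨hB, hA⟩
        · exact Or.inr ⟨hC, hB⟩
      · rintro (⟨hB, hA⟩ | ⟨hC, hB⟩)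
        · exact ⟨le_trans hB h2, hA⟩
        · exact ⟨hC, fun hA => hB (le_trans hA h1)⟩
    · rw [Finset.disjoint_left]
      intro k hk1 hk2
      simp only [Finset.mem_filter] at hk1 hk2
      exact hk2.2.2 hk1.2.1
  -- basic facts about M
  have hMge : ∀ m n j : ℕ, 1 ≤ j → j ≤ n → |S m j| ≤ M m n := by
    intro m n j h1 h2
    rw [hM]
    exact le_csSup ((Set.finite_Icc 1 n).image _).bddAbove ⟨j, ⟨h1, h2⟩, rfl⟩
  have hMub : ∀ (m n : ℕ) (c : ℝ), 1 ≤ n → (∀ j, 1 ≤ j → j ≤ n → |S m j| ≤ c) → M m n ≤ c := by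
    intro m n c hn h
    rw [hM]
    have hne : ((fun j => |S m j|) '' Set.Icc 1 n).Nonempty :=
      ⟨|S m 1|, ⟨1, ⟨le_refl 1, hn⟩, rfl⟩⟩
    apply csSup_le hne
    rintro x ⟨j, ⟨hj1, hj2⟩, rfl⟩
    exact h j hj1 hj2
  have hMnn : ∀ m n : ℕ, 1 ≤ n → 0 ≤ M m n := fun m n hn =>
    le_trans (abs_nonneg _) (hMge m n 1 le_rfl hn)
  intro k n l hl2 hla
  obtain ⟨l', rfl⟩ : ∃ l', l = l' + 1 := ⟨l - 1, by omega⟩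
  simp only [Nat.add_sub_cancel]
  have hA1 : 1 ≤ a ^ n := Nat.one_le_pow _ _ (by omega)
  have hl'1 : 1 ≤ l' := by omega
  have hu1 : 1 ≤ l' * a ^ n := Nat.one_le_iff_ne_zero.2 (by positivity)
  have hsum : (l' + 1) * a ^ n = l' * a ^ n + a ^ n := by ring
  set u := l' * a ^ n with hu
  set A := a ^ n with hAdef
  have hppos : (0 : ℝ) ≤ p := by linarith
  have h2p : (1 : ℝ) ≤ 2 ^ (p - 1) := by
    have : (2 : ℝ) ^ (0 : ℝ) ≤ 2 ^ (p - 1) :=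
      Real.rpow_le_rpow_of_exponent_le one_le_two (by linarith)
    simpa using this
  have hx : (0 : ℝ) ≤ |S k u| := abs_nonneg _
  have hM1 : (0 : ℝ) ≤ M k u := hMnn k u hu1
  have hM2 : (0 : ℝ) ≤ M (k + u) A := hMnn (k + u) A hA1
  have hxM1 : |S k u| ≤ M k u := hMge k u u hu1 le_rfl
  have key : M k ((l' + 1) * A) ≤ max (M k u) (|S k u| + M (k + u) A) := by
    apply hMub _ _ _ (by omega)
    intro j hj1 hj2
    by_cases hj : j ≤ u
    · exact le_trans (hMge k u j hj1 hj) (le_max_left _ _)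
    · obtain ⟨r, hr, hr1, hrA⟩ : ∃ r, j = u + r ∧ 1 ≤ r ∧ r ≤ A := ⟨j - u, by omega⟩
      refine le_trans ?_ (le_max_right _ _)
      rw [hr, hSadd k u r]
      exact le_trans (abs_add_le _ _) (add_le_add_right (hMge (k + u) A r hr1 hrA) _)
  have hMp : M k ((l' + 1) * A) ^ p ≤ (max (M k u) (|S k u| + M (k + u) A)) ^ p :=
    Real.rpow_le_rpow (hMnn k _ (by omega)) key hppos
  refine le_trans hMp ?_
  by_cases hc : |S k u| + M (k + u) A ≤ M k u
  · rw [max_eq_left hc]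
    have e1 : (0 : ℝ) ≤ (2 ^ (p - 1) - 1) * |S k u| ^ p :=
      mul_nonneg (by linarith) (Real.rpow_nonneg hx p)
    have e2 : (0 : ℝ) ≤ 2 ^ (p - 1) * (M (k + u) A) ^ p :=
      mul_nonneg (by linarith) (Real.rpow_nonneg hM2 p)
    linarith
  · rw [max_eq_right (le_of_not_ge hc)]
    have h1 : (|S k u| + M (k + u) A) ^ p
        ≤ 2 ^ (p - 1) * |S k u| ^ p + 2 ^ (p - 1) * (M (k + u) A) ^ p := by
      have := my_add_rpow_le _ _ hx hM2 hp.le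
      linarith [this, mul_add ((2:ℝ) ^ (p - 1)) (|S k u| ^ p) ((M (k + u) A) ^ p)]
    have h2 : |S k u| ^ p ≤ M k u ^ p := Real.rpow_le_rpow hx hxM1 hppos
    linarith
end
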